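/- Second-order Taylor expansion of ball averages: let n ≥ 1, x ∈ ℝⁿ, ε > 0, M ≥ 0, and let φ : ℝⁿ → ℝ be three times continuously differentiable on an open set containing the closed ball of radius ε around x, with ‖D³φ(z)‖ ≤ M for all z in that closed ball. Then | ⨍_{B_ε(x)} φ(z) dz − φ(x) − (ε²/(2(n+2))) Δφ(x) | ≤ M ε³, where Δφ is the Laplacian of φ. -/

import Mathlib

open MeasureTheory Metric Set

variable {n : ℕ}

lemma line_deriv (φ : EuclideanSpace ℝ (Fin n) → ℝ) (U : Set (EuclideanSpace ℝ (Fin n)))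
    (hU : IsOpen U) (hφ : ContDiffOn ℝ 3 φ U) (x h : EuclideanSpace ℝ (Fin n))
    (k : ℕ) (hk : k < 3) (t : ℝ) (hz : x + t • h ∈ U) :
    HasDerivAt (fun s => iteratedFDeriv ℝ k φ (x + s • h) (fun _ => h))
      (iteratedFDeriv ℝ (k + 1) φ (x + t • h) (fun _ => h)) t := by
  have hca : ContDiffAt ℝ 3 φ (x + t • h) := hφ.contDiffAt (hU.mem_nhds hz)
  have hle : (1 : WithTop ℕ∞) + k ≤ 3 := by
    interval_cases k <;> norm_num
  have h1 : ContDiffAt ℝ 1 (iteratedFDeriv ℝ k φ) (x + t • h) :=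
    hca.iteratedFDeriv_right hle
  have hD := (h1.differentiableAt (by norm_num)).hasFDerivAt
  have line : HasDerivAt (fun s : ℝ => x + s • h) h t := by
    simpa using ((hasDerivAt_id t).smul_const h).const_add x
  have comp : HasDerivAt (fun s => iteratedFDeriv ℝ k φ (x + s • h))
      (fderiv ℝ (iteratedFDeriv ℝ k φ) (x + t • h) h) t := hD.comp_hasDerivAt t line
  have final := ((ContinuousMultilinearMap.apply ℝ (fun _ : Fin k => EuclideanSpace ℝ (Fin n)) ℝ
      (fun _ => h)).hasFDerivAt).comp_hasDerivAt t comp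
  have : iteratedFDeriv ℝ (k + 1) φ (x + t • h) (fun _ => h)
      = (fderiv ℝ (iteratedFDeriv ℝ k φ) (x + t • h) h) (fun _ => h) := by
    rw [iteratedFDeriv_succ_apply_left]
    rfl
  rw [this]
  exact final

lemma taylor_bound (φ : EuclideanSpace ℝ (Fin n) → ℝ) (U : Set (EuclideanSpace ℝ (Fin n)))
    (hU : IsOpen U) (hφ : ContDiffOn ℝ 3 φ U) (x : EuclideanSpace ℝ (Fin n)) (ε M : ℝ)
    (hε : 0 < ε) (hM : 0 ≤ M) (hUball : Metric.closedBall x ε ⊆ U)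
    (hD3 : ∀ z ∈ Metric.closedBall x ε, ‖iteratedFDeriv ℝ 3 φ z‖ ≤ M)
    (h : EuclideanSpace ℝ (Fin n)) (hh : ‖h‖ ≤ ε) :
    |φ (x + h) - (φ x + iteratedFDeriv ℝ 1 φ x (fun _ => h)
      + iteratedFDeriv ℝ 2 φ x (fun _ => h) / 2)| ≤ M / 2 * ‖h‖ ^ 3 := by
  set G : ℕ → ℝ → ℝ := fun k t => iteratedFDeriv ℝ k φ (x + t • h) (fun _ => h) with hG
  set F : ℝ → ℝ := fun t => G 0 t + (1 - t) * G 1 t + (1 - t) ^ 2 / 2 * G 2 t with hF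
  set F' : ℝ → ℝ := fun t => (1 - t) ^ 2 / 2 * G 3 t with hF'
  have hmem : ∀ t ∈ Icc (0:ℝ) 1, x + t • h ∈ Metric.closedBall x ε := by
    intro t ht
    rw [Metric.mem_closedBall, dist_eq_norm, add_sub_cancel_left, norm_smul,
      Real.norm_eq_abs, abs_of_nonneg ht.1]
    calc t * ‖h‖ ≤ 1 * ‖h‖ := by
          apply mul_le_mul_of_nonneg_right ht.2 (norm_nonneg h)
      _ ≤ ε := by rwa [one_mul]
  have hGd : ∀ k : ℕ, k < 3 → ∀ t ∈ Icc (0:ℝ) 1, HasDerivAt (G k) (G (k+1) t) t := by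
    intro k hk t ht
    exact line_deriv φ U hU hφ x h k hk t (hUball (hmem t ht))
  have hFd : ∀ t ∈ Icc (0:ℝ) 1, HasDerivAt F (F' t) t := by
    intro t ht
    have d0 := hGd 0 (by norm_num) t ht
    have d1 := hGd 1 (by norm_num) t ht
    have d2 := hGd 2 (by norm_num) t ht
    have l1 : HasDerivAt (fun s : ℝ => 1 - s) (-1) t := by
      simpa using (hasDerivAt_id t).const_sub 1
    have big := (d0.add ((l1.mul d1))).add ((((l1.pow 2).div_const 2)).mul d2)
    refine HasDerivAt.congr_deriv big ?_
    simp only [hF', Pi.pow_apply]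
    ring
  have hFb : ∀ t ∈ Icc (0:ℝ) 1, ‖F' t‖ ≤ M / 2 * ‖h‖ ^ 3 := by
    intro t ht
    have hb3 : |G 3 t| ≤ M * ‖h‖ ^ 3 := by
      have := (iteratedFDeriv ℝ 3 φ (x + t • h)).le_opNorm (fun _ => h)
      rw [← Real.norm_eq_abs]
      calc ‖G 3 t‖ ≤ ‖iteratedFDeriv ℝ 3 φ (x + t • h)‖ * ∏ _i : Fin 3, ‖h‖ := this
        _ = ‖iteratedFDeriv ℝ 3 φ (x + t • h)‖ * ‖h‖ ^ 3 := by
            rw [Finset.prod_const, Finset.card_univ, Fintype.card_fin]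
        _ ≤ M * ‖h‖ ^ 3 := by
            apply mul_le_mul_of_nonneg_right (hD3 _ (hmem t ht)) (by positivity)
    have h1t : (1 - t) ^ 2 / 2 ≤ 1 / 2 := by nlinarith [ht.1, ht.2]
    have h1t' : (0:ℝ) ≤ (1 - t) ^ 2 / 2 := by positivity
    rw [hF', Real.norm_eq_abs, abs_mul, abs_of_nonneg h1t']
    calc (1 - t) ^ 2 / 2 * |G 3 t| ≤ 1 / 2 * (M * ‖h‖ ^ 3) := by
          apply mul_le_mul h1t hb3 (abs_nonneg _) (by norm_num)
      _ = M / 2 * ‖h‖ ^ 3 := by ring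
  have key := norm_image_sub_le_of_norm_deriv_le_segment'
    (fun t ht => (hFd t ht).hasDerivWithinAt) (fun t ht => hFb t (Ico_subset_Icc_self ht)) 1 (by norm_num : (1:ℝ) ∈ Icc (0:ℝ) 1)
  have hF1 : F 1 = φ (x + h) := by
    simp [hF, hG, iteratedFDeriv_zero_apply]
  have hF0 : F 0 = φ x + iteratedFDeriv ℝ 1 φ x (fun _ => h)
      + iteratedFDeriv ℝ 2 φ x (fun _ => h) / 2 := by
    simp [hF, hG, iteratedFDeriv_zero_apply]
    ring
  rw [hF1, hF0, Real.norm_eq_abs] at key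
  simpa using key
lemma isom_setIntegral (ε : ℝ)
    (e : EuclideanSpace ℝ (Fin n) ≃ₗᵢ[ℝ] EuclideanSpace ℝ (Fin n))
    (g : EuclideanSpace ℝ (Fin n) → ℝ) :
    ∫ h in ball (0 : EuclideanSpace ℝ (Fin n)) ε, g (e h)
      = ∫ h in ball (0 : EuclideanSpace ℝ (Fin n)) ε, g h := by
  have hpre : e ⁻¹' ball (0 : EuclideanSpace ℝ (Fin n)) ε = ball 0 ε := by
    ext h; simp [mem_ball_zero_iff]
  conv_lhs => rw [← hpre]
  exact e.measurePreserving.setIntegral_preimage_emb e.toHomeomorph.measurableEmbedding g _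

lemma integrableOn_ball_of_continuous (ε : ℝ) (x : EuclideanSpace ℝ (Fin n))
    {f : EuclideanSpace ℝ (Fin n) → ℝ} (hf : Continuous f) :
    IntegrableOn f (ball x ε) :=
  ((hf.continuousOn).integrableOn_compact (isCompact_closedBall x ε)).mono_set
    ball_subset_closedBall

lemma offdiag_int (ε : ℝ) (i j : Fin n) (hij : i ≠ j) :
    ∫ h in ball (0 : EuclideanSpace ℝ (Fin n)) ε, h i * h j = 0 := by
  classical
  set e : EuclideanSpace ℝ (Fin n) ≃ₗᵢ[ℝ] EuclideanSpace ℝ (Fin n) :=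
    LinearIsometryEquiv.piLpCongrRight 2
      (fun k => if k = i then LinearIsometryEquiv.neg ℝ else LinearIsometryEquiv.refl ℝ ℝ) with he
  have happ : ∀ (h : EuclideanSpace ℝ (Fin n)) (k : Fin n),
      e h k = if k = i then -h k else h k := by
    intro h k
    simp only [he, LinearIsometryEquiv.piLpCongrRight_apply]
    by_cases hk : k = i
    · subst hk; simp
    · simp [hk]
  have key := isom_setIntegral (n := n) ε e (fun h => h i * h j)
  have : (fun h : EuclideanSpace ℝ (Fin n) => (e h) i * (e h) j)
      = fun h : EuclideanSpace ℝ (Fin n) => -(h i * h j) := by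
    funext h
    rw [happ h i, happ h j, if_pos rfl, if_neg hij.symm]
    ring
  rw [show (∫ h in ball (0 : EuclideanSpace ℝ (Fin n)) ε, (fun h : EuclideanSpace ℝ (Fin n) => h i * h j) (e h))
      = ∫ h in ball (0 : EuclideanSpace ℝ (Fin n)) ε, -(h i * h j) from by rw [← this]] at key
  rw [integral_neg] at key
  linarith [key]

lemma diag_int_eq (ε : ℝ) (i j : Fin n) :
    ∫ h in ball (0 : EuclideanSpace ℝ (Fin n)) ε, h i ^ 2
      = ∫ h in ball (0 : EuclideanSpace ℝ (Fin n)) ε, h j ^ 2 := by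
  classical
  set e : EuclideanSpace ℝ (Fin n) ≃ₗᵢ[ℝ] EuclideanSpace ℝ (Fin n) :=
    LinearIsometryEquiv.piLpCongrLeft 2 ℝ ℝ (Equiv.swap i j) with he
  have happ : ∀ (h : EuclideanSpace ℝ (Fin n)),
      e h i = h ((Equiv.swap i j).symm i) := by
    intro h
    simp [he, LinearIsometryEquiv.piLpCongrLeft_apply, Equiv.piCongrLeft'_apply]
  have key := isom_setIntegral (n := n) ε e (fun h => h i ^ 2)
  have heq : (fun h : EuclideanSpace ℝ (Fin n) => (e h) i ^ 2)
      = fun h : EuclideanSpace ℝ (Fin n) => h j ^ 2 := by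
    funext h
    rw [happ h, Equiv.symm_swap, Equiv.swap_apply_left]
  rw [show (∫ h in ball (0 : EuclideanSpace ℝ (Fin n)) ε, (fun h : EuclideanSpace ℝ (Fin n) => h i ^ 2) (e h))
      = ∫ h in ball (0 : EuclideanSpace ℝ (Fin n)) ε, h j ^ 2 from by rw [← heq]] at key
  exact key.symm

lemma V2_eq (n : ℕ) (hn : 1 ≤ n) (ε : ℝ) (hε : 0 < ε) :
    ∫ h in ball (0 : EuclideanSpace ℝ (Fin n)) ε, ‖h‖ ^ 2
      = n * (volume (ball (0 : EuclideanSpace ℝ (Fin n)) 1)).toReal * (ε ^ (n + 2) / (n + 2)) := by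
  haveI : Nontrivial (EuclideanSpace ℝ (Fin n)) := by
    rw [← Module.finrank_pos_iff (R := ℝ), finrank_euclideanSpace_fin]
    omega
  set f : ℝ → ℝ := (Iio ε).indicator (fun r => r ^ 2) with hf
  have key := MeasureTheory.integral_fun_norm_addHaar (volume : Measure (EuclideanSpace ℝ (Fin n))) f
  rw [finrank_euclideanSpace_fin] at key
  have h1 : (fun (x : EuclideanSpace ℝ (Fin n)) => f ‖x‖)
      = (ball (0 : EuclideanSpace ℝ (Fin n)) ε).indicator (fun x => ‖x‖ ^ 2) := by
    funext x
    by_cases hx : ‖x‖ < ε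
    · rw [indicator_of_mem (mem_ball_zero_iff.2 hx), hf, indicator_of_mem (mem_Iio.2 hx)]
    · rw [indicator_of_notMem (fun hc => hx (mem_ball_zero_iff.1 hc)), hf,
        indicator_of_notMem (fun hc => hx (mem_Iio.1 hc))]
  rw [h1, integral_indicator measurableSet_ball] at key
  rw [key]
  have h2 : ∀ y ∈ Ioi (0:ℝ), y ^ (n - 1) • f y = (Iio ε).indicator (fun y => y ^ (n + 1)) y := by
    intro y hy
    by_cases hyε : y < ε
    · rw [hf, indicator_of_mem (mem_Iio.2 hyε), indicator_of_mem (mem_Iio.2 hyε),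
        smul_eq_mul, ← pow_add]
      congr 1
      omega
    · rw [hf, indicator_of_notMem (fun hc => hyε (mem_Iio.1 hc)),
        indicator_of_notMem (fun hc => hyε (mem_Iio.1 hc)), smul_zero]
  rw [setIntegral_congr_fun measurableSet_Ioi h2]
  rw [integral_indicator measurableSet_Iio]
  have h3 : Ioi (0:ℝ) ∩ Iio ε = Ioo 0 ε := by ext y; simp [mem_Ioo, and_comm]
  rw [Measure.restrict_restrict measurableSet_Iio, inter_comm, h3]
  have h4 : ∫ y in Ioo (0:ℝ) ε, y ^ (n + 1) = ε ^ (n + 2) / (n + 2) := by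
    rw [← integral_Ioc_eq_integral_Ioo, ← intervalIntegral.integral_of_le hε.le,
      integral_pow]
    push_cast
    ring
  rw [h4, nsmul_eq_mul, smul_eq_mul]
  rw [measureReal_def]
  ring

lemma diag_int (hn : 1 ≤ n) (ε : ℝ) (hε : 0 < ε) (i : Fin n) :
    ∫ h in ball (0 : EuclideanSpace ℝ (Fin n)) ε, h i ^ 2
      = (volume (ball (0 : EuclideanSpace ℝ (Fin n)) 1)).toReal * (ε ^ (n + 2) / (n + 2)) := by
  have hsum : ∑ j : Fin n, ∫ h in ball (0 : EuclideanSpace ℝ (Fin n)) ε, h j ^ 2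
      = ∫ h in ball (0 : EuclideanSpace ℝ (Fin n)) ε, ‖h‖ ^ 2 := by
    rw [← integral_finset_sum]
    · apply setIntegral_congr_fun measurableSet_ball
      intro h _
      show ∑ j : Fin n, h j ^ 2 = ‖h‖ ^ 2
      rw [← Real.sq_sqrt (Finset.sum_nonneg (fun j _ => sq_nonneg (h j)))]
      congr 1
      rw [EuclideanSpace.norm_eq]
      congr 1
      apply Finset.sum_congr rfl
      intro j _
      rw [Real.norm_eq_abs, sq_abs]
    · intro j _
      exact integrableOn_ball_of_continuous ε 0
        ((EuclideanSpace.proj j : EuclideanSpace ℝ (Fin n) →L[ℝ] ℝ).continuous.pow 2)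
  have hall : ∀ j, (∫ h in ball (0 : EuclideanSpace ℝ (Fin n)) ε, h j ^ 2)
      = ∫ h in ball (0 : EuclideanSpace ℝ (Fin n)) ε, h i ^ 2 :=
    fun j => diag_int_eq ε j i
  rw [Finset.sum_congr rfl (fun j _ => hall j), Finset.sum_const, Finset.card_univ,
    Fintype.card_fin, V2_eq n hn ε hε, nsmul_eq_mul] at hsum
  have hn0 : (n : ℝ) ≠ 0 := by positivity
  refine mul_left_cancel₀ hn0 (hsum.trans ?_)
  ring

lemma quad_expand (B : ContinuousMultilinearMap ℝ (fun _ : Fin 2 => EuclideanSpace ℝ (Fin n)) ℝ)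
    (h : EuclideanSpace ℝ (Fin n)) :
    B (fun _ => h) = ∑ p : Fin n × Fin n,
      h p.1 * h p.2 * B ![EuclideanSpace.single p.1 1, EuclideanSpace.single p.2 1] := by
  classical
  have hdec : (fun _ : Fin 2 => h) = fun _ : Fin 2 => ∑ i : Fin n,
      h i • EuclideanSpace.single i (1 : ℝ) := by
    funext k
    ext j
    have : (∑ i : Fin n, h i • EuclideanSpace.single i (1 : ℝ)) j
        = ∑ i : Fin n, (h i • EuclideanSpace.single i (1 : ℝ)) j := by simp only [WithLp.ofLp_sum, Finset.sum_apply]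
    rw [this]
    simp [EuclideanSpace.single_apply, PiLp.smul_apply]
  rw [hdec, B.map_sum]
  rw [← (piFinTwoEquiv (fun _ : Fin 2 => Fin n)).symm.sum_comp]
  apply Finset.sum_congr rfl
  intro p _
  have hr : ∀ k : Fin 2, (piFinTwoEquiv (fun _ : Fin 2 => Fin n)).symm p k
      = ![p.1, p.2] k := by
    intro k
    fin_cases k <;> rfl
  have : (fun k : Fin 2 => h ((piFinTwoEquiv (fun _ : Fin 2 => Fin n)).symm p k) •
        EuclideanSpace.single ((piFinTwoEquiv (fun _ : Fin 2 => Fin n)).symm p k) (1:ℝ))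
      = fun k => (fun k' => h (![p.1, p.2] k')) k • (fun k' => EuclideanSpace.single (![p.1, p.2] k') (1:ℝ)) k := by
    funext k; rw [hr k]
  rw [this, B.map_smul_univ]
  rw [Fin.prod_univ_two]
  simp only [Matrix.cons_val_zero, Matrix.cons_val_one, Matrix.head_cons, smul_eq_mul]
  congr 1
  congr 1
  funext k
  fin_cases k <;> rfl

lemma quad_int (hn : 1 ≤ n) (ε : ℝ) (hε : 0 < ε)
    (B : ContinuousMultilinearMap ℝ (fun _ : Fin 2 => EuclideanSpace ℝ (Fin n)) ℝ) :
    ∫ h in ball (0 : EuclideanSpace ℝ (Fin n)) ε, B (fun _ => h)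
      = (∑ i : Fin n, B (fun _ => EuclideanSpace.single i (1:ℝ)))
          * ((volume (ball (0 : EuclideanSpace ℝ (Fin n)) 1)).toReal * (ε ^ (n + 2) / (n + 2))) := by
  classical
  set κ : ℝ := (volume (ball (0 : EuclideanSpace ℝ (Fin n)) 1)).toReal * (ε ^ (n + 2) / (n + 2))
    with hκ
  have hint : ∀ p : Fin n × Fin n, IntegrableOn
      (fun h : EuclideanSpace ℝ (Fin n) => h p.1 * h p.2
        * B ![EuclideanSpace.single p.1 1, EuclideanSpace.single p.2 1]) (ball 0 ε) := by
    intro p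
    apply integrableOn_ball_of_continuous
    exact (((EuclideanSpace.proj p.1 : EuclideanSpace ℝ (Fin n) →L[ℝ] ℝ).continuous.mul
      (EuclideanSpace.proj p.2 : EuclideanSpace ℝ (Fin n) →L[ℝ] ℝ).continuous).mul
      continuous_const)
  calc ∫ h in ball (0 : EuclideanSpace ℝ (Fin n)) ε, B (fun _ => h)
      = ∫ h in ball (0 : EuclideanSpace ℝ (Fin n)) ε, ∑ p : Fin n × Fin n,
          h p.1 * h p.2 * B ![EuclideanSpace.single p.1 1, EuclideanSpace.single p.2 1] := by
        apply setIntegral_congr_fun measurableSet_ball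
        intro h _
        exact quad_expand B h
    _ = ∑ p : Fin n × Fin n, ∫ h in ball (0 : EuclideanSpace ℝ (Fin n)) ε,
          h p.1 * h p.2 * B ![EuclideanSpace.single p.1 1, EuclideanSpace.single p.2 1] :=
        integral_finset_sum _ (fun p _ => hint p)
    _ = ∑ p : Fin n × Fin n, (∫ h in ball (0 : EuclideanSpace ℝ (Fin n)) ε, h p.1 * h p.2)
          * B ![EuclideanSpace.single p.1 1, EuclideanSpace.single p.2 1] := by
        apply Finset.sum_congr rfl
        intro p _
        exact integral_mul_const _ _
    _ = ∑ i : Fin n, ∑ j : Fin n, (∫ h in ball (0 : EuclideanSpace ℝ (Fin n)) ε, h i * h j)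
          * B ![EuclideanSpace.single i 1, EuclideanSpace.single j 1] :=
        by rw [Fintype.sum_prod_type]
    _ = ∑ i : Fin n, κ * B (fun _ => EuclideanSpace.single i (1:ℝ)) := by
        apply Finset.sum_congr rfl
        intro i _
        rw [Finset.sum_eq_single i]
        · have : (∫ h in ball (0 : EuclideanSpace ℝ (Fin n)) ε, h i * h i) = κ := by
            rw [hκ, ← diag_int hn ε hε i]
            apply setIntegral_congr_fun measurableSet_ball
            intro h _
            show h i * h i = h i ^ 2
            ring
          rw [this]
          congr 1
          congr 1
          funext k
          fin_cases k <;> rfl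
        · intro j _ hji
          rw [offdiag_int ε i j (fun hc => hji (hc.symm ▸ rfl)), zero_mul]
        · intro hi
          exact absurd (Finset.mem_univ i) hi
    _ = (∑ i : Fin n, B (fun _ => EuclideanSpace.single i (1:ℝ))) * κ := by
        rw [Finset.sum_mul]
        apply Finset.sum_congr rfl
        intro i _
        ring

lemma lin_int (ε : ℝ) (L : EuclideanSpace ℝ (Fin n) →L[ℝ] ℝ) :
    ∫ h in ball (0 : EuclideanSpace ℝ (Fin n)) ε, L h = 0 := by
  have key := isom_setIntegral (n := n) ε (LinearIsometryEquiv.neg ℝ) (fun h => L h)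
  have heq : (fun h : EuclideanSpace ℝ (Fin n) => L ((LinearIsometryEquiv.neg ℝ) h))
      = fun h : EuclideanSpace ℝ (Fin n) => -(L h) := by
    funext h
    simp
  rw [show (∫ h in ball (0 : EuclideanSpace ℝ (Fin n)) ε,
      (fun h : EuclideanSpace ℝ (Fin n) => L h) ((LinearIsometryEquiv.neg ℝ) h))
      = ∫ h in ball (0 : EuclideanSpace ℝ (Fin n)) ε, -(L h) from by rw [← heq]] at key
  rw [integral_neg] at key
  linarith [key]

lemma transl_int (ε : ℝ) (x : EuclideanSpace ℝ (Fin n)) (f : EuclideanSpace ℝ (Fin n) → ℝ) :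
    ∫ z in ball x ε, f z = ∫ h in ball (0 : EuclideanSpace ℝ (Fin n)) ε, f (x + h) := by
  have mp : MeasurePreserving (fun h : EuclideanSpace ℝ (Fin n) => x + h) volume volume :=
    measurePreserving_add_left volume x
  have hpre : (fun h : EuclideanSpace ℝ (Fin n) => x + h) ⁻¹' ball x ε = ball 0 ε := by
    ext h
    simp [mem_ball, dist_eq_norm]
  rw [← mp.setIntegral_preimage_emb (Homeomorph.addLeft x).measurableEmbedding f (ball x ε), hpre]

/-- **Second-order Taylor expansion of ball averages.** Let `φ` be `C³` on an open set
containing the closed ball `B̄_ε(x)` with `‖D³φ‖ ≤ M` there. Then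
`|⨍_{B_ε(x)} φ − φ(x) − (ε²/(2(n+2))) Δφ(x)| ≤ M ε³`, where
`Δφ(x) = Σᵢ D²φ(x)[eᵢ, eᵢ]` is the Laplacian. -/
theorem ball_average_taylor_expansion (n : ℕ) (hn : 1 ≤ n)
    (x : EuclideanSpace ℝ (Fin n)) (ε M : ℝ) (hε : 0 < ε) (hM : 0 ≤ M)
    (φ : EuclideanSpace ℝ (Fin n) → ℝ)
    (U : Set (EuclideanSpace ℝ (Fin n))) (hU : IsOpen U)
    (hUball : Metric.closedBall x ε ⊆ U)
    (hφ : ContDiffOn ℝ 3 φ U)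
    (hD3 : ∀ z ∈ Metric.closedBall x ε, ‖iteratedFDeriv ℝ 3 φ z‖ ≤ M) :
    |(⨍ z in Metric.ball x ε, φ z) - φ x -
        (ε ^ 2 / (2 * (n + 2))) *
          ∑ i : Fin n,
            iteratedFDeriv ℝ 2 φ x (fun _ => EuclideanSpace.single i (1 : ℝ))| ≤
      M * ε ^ 3 := by
  classical
  haveI : Nontrivial (EuclideanSpace ℝ (Fin n)) := by
    rw [← Module.finrank_pos_iff (R := ℝ), finrank_euclideanSpace_fin]
    omega
  set B1 : ℝ := (volume (ball (0 : EuclideanSpace ℝ (Fin n)) 1)).toReal with hB1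
  set vol : ℝ := (volume (ball (0 : EuclideanSpace ℝ (Fin n)) ε)).toReal with hvoldef
  have hB1pos : 0 < B1 := ENNReal.toReal_pos (measure_ball_pos volume 0 one_pos).ne'
    measure_ball_lt_top.ne
  have hvol : vol = ε ^ n * B1 := by
    rw [hvoldef, Measure.addHaar_ball _ 0 hε.le, finrank_euclideanSpace_fin,
      ENNReal.toReal_mul, ENNReal.toReal_ofReal (by positivity)]
  have hvolpos : 0 < vol := by rw [hvol]; positivity
  set T1 : EuclideanSpace ℝ (Fin n) → ℝ := fun h => iteratedFDeriv ℝ 1 φ x (fun _ => h) with hT1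
  set T2 : EuclideanSpace ℝ (Fin n) → ℝ := fun h => iteratedFDeriv ℝ 2 φ x (fun _ => h) with hT2
  set Δ : ℝ := ∑ i : Fin n, iteratedFDeriv ℝ 2 φ x (fun _ => EuclideanSpace.single i (1:ℝ))
    with hΔ
  set R : EuclideanSpace ℝ (Fin n) → ℝ := fun h => φ (x + h) - (φ x + T1 h + T2 h / 2) with hR
  -- integrability
  have hφc : ContinuousOn (fun h : EuclideanSpace ℝ (Fin n) => φ (x + h))
      (closedBall (0 : EuclideanSpace ℝ (Fin n)) ε) := by
    apply hφ.continuousOn.comp ((continuous_const.add continuous_id).continuousOn)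
    intro h hh
    apply hUball
    show x + h ∈ closedBall x ε
    rw [mem_closedBall, dist_eq_norm, add_sub_cancel_left]
    exact mem_closedBall_zero_iff.1 hh
  have hφint : IntegrableOn (fun h : EuclideanSpace ℝ (Fin n) => φ (x + h)) (ball 0 ε) :=
    (hφc.integrableOn_compact (isCompact_closedBall _ _)).mono_set ball_subset_closedBall
  have hT1c : Continuous T1 :=
    (iteratedFDeriv ℝ 1 φ x).coe_continuous.comp (continuous_pi fun _ => continuous_id)
  have hT2c : Continuous T2 :=
    (iteratedFDeriv ℝ 2 φ x).coe_continuous.comp (continuous_pi fun _ => continuous_id)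
  have hT1int := integrableOn_ball_of_continuous ε (0 : EuclideanSpace ℝ (Fin n)) hT1c
  have hT2int := integrableOn_ball_of_continuous ε (0 : EuclideanSpace ℝ (Fin n)) hT2c
  have hconstint : IntegrableOn (fun _ : EuclideanSpace ℝ (Fin n) => φ x) (ball 0 ε) :=
    integrableOn_const measure_ball_lt_top.ne
  have hpolyint : IntegrableOn (fun h : EuclideanSpace ℝ (Fin n) => φ x + T1 h + T2 h / 2)
      (ball 0 ε) := (hconstint.add hT1int).add (hT2int.div_const 2)
  have hRint : IntegrableOn R (ball 0 ε) := hφint.sub hpolyint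
  -- values of the integrals
  have hT1zero : ∫ h in ball (0 : EuclideanSpace ℝ (Fin n)) ε, T1 h = 0 := by
    have : T1 = fun h => (fderiv ℝ φ x) h := by
      funext h
      exact iteratedFDeriv_one_apply _
    rw [this]
    exact lin_int ε (fderiv ℝ φ x)
  have hT2val : ∫ h in ball (0 : EuclideanSpace ℝ (Fin n)) ε, T2 h
      = Δ * (B1 * (ε ^ (n + 2) / (n + 2))) := quad_int hn ε hε (iteratedFDeriv ℝ 2 φ x)
  have hsplit : ∫ h in ball (0 : EuclideanSpace ℝ (Fin n)) ε, φ (x + h)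
      = (∫ h in ball (0 : EuclideanSpace ℝ (Fin n)) ε, R h)
        + (vol * φ x + Δ * (B1 * (ε ^ (n + 2) / (n + 2))) / 2) := by
    calc ∫ h in ball (0 : EuclideanSpace ℝ (Fin n)) ε, φ (x + h)
        = ∫ h in ball (0 : EuclideanSpace ℝ (Fin n)) ε, (R h + (φ x + T1 h + T2 h / 2)) := by
          apply setIntegral_congr_fun measurableSet_ball
          intro h _
          show φ (x + h) = R h + (φ x + T1 h + T2 h / 2)
          rw [hR]
          ring
      _ = (∫ h in ball (0 : EuclideanSpace ℝ (Fin n)) ε, R h)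
          + ∫ h in ball (0 : EuclideanSpace ℝ (Fin n)) ε, (φ x + T1 h + T2 h / 2) :=
          integral_add hRint hpolyint
      _ = (∫ h in ball (0 : EuclideanSpace ℝ (Fin n)) ε, R h)
          + ((∫ _h in ball (0 : EuclideanSpace ℝ (Fin n)) ε, φ x)
            + ((∫ h in ball (0 : EuclideanSpace ℝ (Fin n)) ε, T1 h)
              + ∫ h in ball (0 : EuclideanSpace ℝ (Fin n)) ε, T2 h / 2)) := by
          have h12 : IntegrableOn (fun h : EuclideanSpace ℝ (Fin n) => φ x + T1 h)
              (ball 0 ε) volume := hconstint.add hT1int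
          rw [integral_add h12 (hT2int.div_const 2), integral_add hconstint hT1int]
          ring
      _ = (∫ h in ball (0 : EuclideanSpace ℝ (Fin n)) ε, R h)
          + (vol * φ x + Δ * (B1 * (ε ^ (n + 2) / (n + 2))) / 2) := by
          rw [hT1zero, integral_div, hT2val, setIntegral_const, smul_eq_mul, measureReal_def, ← hvoldef]
          ring
  have havg : (⨍ z in ball x ε, φ z) = vol⁻¹ * ∫ h in ball (0 : EuclideanSpace ℝ (Fin n)) ε,
      φ (x + h) := by
    rw [setAverage_eq, transl_int ε x φ, measureReal_def, Measure.addHaar_ball_center volume x, smul_eq_mul]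
  have hcast : ((n : ℝ) + 2) ≠ 0 := by positivity
  have key : (⨍ z in ball x ε, φ z) - φ x - (ε ^ 2 / (2 * (n + 2))) * Δ
      = vol⁻¹ * ∫ h in ball (0 : EuclideanSpace ℝ (Fin n)) ε, R h := by
    rw [havg, hsplit]
    rw [hvol]
    have hεn : (ε : ℝ) ^ (n + 2) = ε ^ n * ε ^ 2 := pow_add ε n 2
    rw [hεn]
    field_simp
    ring
  rw [key]
  have hRbound : |∫ h in ball (0 : EuclideanSpace ℝ (Fin n)) ε, R h| ≤ (M / 2 * ε ^ 3) * vol := by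
    rw [← Real.norm_eq_abs]
    have hb : ∀ h ∈ ball (0 : EuclideanSpace ℝ (Fin n)) ε, ‖R h‖ ≤ M / 2 * ε ^ 3 := by
      intro h hh
      have hh' : ‖h‖ ≤ ε := (mem_ball_zero_iff.1 hh).le
      have := taylor_bound φ U hU hφ x ε M hε hM hUball hD3 h hh'
      rw [Real.norm_eq_abs]
      calc |R h| ≤ M / 2 * ‖h‖ ^ 3 := this
        _ ≤ M / 2 * ε ^ 3 := by
            apply mul_le_mul_of_nonneg_left (pow_le_pow_left₀ (norm_nonneg h) hh' 3) (by positivity)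
    exact norm_setIntegral_le_of_norm_le_const measure_ball_lt_top hb
  calc |vol⁻¹ * ∫ h in ball (0 : EuclideanSpace ℝ (Fin n)) ε, R h|
      = vol⁻¹ * |∫ h in ball (0 : EuclideanSpace ℝ (Fin n)) ε, R h| := by
        rw [abs_mul, abs_of_nonneg (inv_nonneg.2 hvolpos.le)]
    _ ≤ vol⁻¹ * ((M / 2 * ε ^ 3) * vol) := by
        apply mul_le_mul_of_nonneg_left hRbound (inv_nonneg.2 hvolpos.le)
    _ = M / 2 * ε ^ 3 := by
        field_simp
    _ ≤ M * ε ^ 3 := by nlinarith [pow_pos hε 3]
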